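/- The Jacobson radical of the contracted semigroup algebra ℚ₀T¹ equals the one-dimensional ℚ-subspace spanned by the image of e − f; in particular it is a two-sided ideal of square zero and ℚ₀T¹ modulo its Jacobson radical is isomorphic to ℚ × ℚ. -/

import Mathlib

/-- The four-element monoid `T¹ = {1, e, f, θ}` with `θ` an absorbing zero,
`e² = e`, `f² = f`, `ef = f`, `fe = e`. -/
inductive T1 : Type
  | one : T1
  | e : T1
  | f : T1
  | theta : T1
deriving DecidableEq

instance : Fintype T1 where
  elems := {.one, .e, .f, .theta}
  complete := by intro x; cases x <;> simp

instance : Monoid T1 where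
  one := .one
  mul x y :=
    match x, y with
    | .one, y => y
    | x, .one => x
    | .theta, _ => .theta
    | _, .theta => .theta
    | _, .e => .e
    | _, .f => .f
  mul_assoc := by decide
  one_mul := by decide
  mul_one := by decide

/-- The contracted semigroup algebra `ℚ₀T¹`: the quotient of the monoid algebra
`ℚ[T¹]` by the two-sided ideal spanned by `θ`. -/
noncomputable abbrev Q0T1 : Type :=
  (TwoSidedIdeal.span {MonoidAlgebra.single T1.theta (1 : ℚ)}).ringCon.Quotient

/-- The `ℚ`-algebra structure on the quotient of a `ℚ`-algebra by a two-sided ideal. -/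
noncomputable instance quotAlgebra {A : Type*} [Ring A] [Algebra ℚ A]
    (I : TwoSidedIdeal A) : Algebra ℚ I.ringCon.Quotient :=
  RingHom.toAlgebra'
    ((I.ringCon.mk' : A →+* I.ringCon.Quotient).comp (algebraMap ℚ A))
    (fun q x => Quotient.inductionOn' x fun a => by
      show (I.ringCon.mk' (algebraMap ℚ A q)) * I.ringCon.mk' a
          = I.ringCon.mk' a * I.ringCon.mk' (algebraMap ℚ A q)
      rw [← map_mul, ← map_mul, Algebra.commutes])



/-- The canonical projection from `ℚ[T¹]` onto the contracted algebra `ℚ₀T¹`. -/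
noncomputable def q0mk : MonoidAlgebra ℚ T1 →+* Q0T1 :=
  (TwoSidedIdeal.span {MonoidAlgebra.single T1.theta (1 : ℚ)}).ringCon.mk'

set_option synthInstance.maxHeartbeats 1000000
set_option maxHeartbeats 1000000
def chi : T1 →* ℚ × ℚ where
  toFun t := match t with
    | .one => (1, 1) | .e => (0, 1) | .f => (0, 1) | .theta => 0
  map_one' := rfl
  map_mul' := by intro x y; cases x <;> cases y <;> norm_num

noncomputable def Phi : MonoidAlgebra ℚ T1 →ₐ[ℚ] ℚ × ℚ :=
  (MonoidAlgebra.lift ℚ (ℚ × ℚ) T1) chi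

lemma mem_I0_Phi (x : MonoidAlgebra ℚ T1)
    (hx : x ∈ TwoSidedIdeal.span {MonoidAlgebra.single T1.theta (1 : ℚ)}) : Phi x = 0 := by
  have := TwoSidedIdeal.mem_span_iff.mp hx (TwoSidedIdeal.ker Phi.toRingHom)
    (by intro y hy; rw [Set.mem_singleton_iff] at hy; subst hy
        rw [SetLike.mem_coe, TwoSidedIdeal.mem_ker]
        show Phi (MonoidAlgebra.single T1.theta 1) = 0
        simp [Phi, chi])
  rwa [TwoSidedIdeal.mem_ker] at this

lemma Phi_sound (a b : MonoidAlgebra ℚ T1)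
    (h : (TwoSidedIdeal.span {MonoidAlgebra.single T1.theta (1:ℚ)}).ringCon a b) :
    Phi a = Phi b := by
  rw [TwoSidedIdeal.rel_iff] at h
  have := mem_I0_Phi _ h
  rw [map_sub, sub_eq_zero] at this
  exact this

noncomputable def phi : Q0T1 →ₐ[ℚ] ℚ × ℚ where
  toFun x := Quotient.liftOn' x Phi Phi_sound
  map_one' := map_one Phi
  map_mul' x y := Quotient.inductionOn₂' x y fun a b => map_mul Phi a b
  map_zero' := map_zero Phi
  map_add' x y := Quotient.inductionOn₂' x y fun a b => map_add Phi a b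
  commutes' q := Phi.commutes q

lemma phi_q0mk (g : MonoidAlgebra ℚ T1) : phi (q0mk g) = Phi g := rfl
lemma q0mk_algebraMap (c : ℚ) : q0mk (algebraMap ℚ (MonoidAlgebra ℚ T1) c) = algebraMap ℚ Q0T1 c := rfl

lemma q0mk_smul (c : ℚ) (x : MonoidAlgebra ℚ T1) : q0mk (c • x) = c • q0mk x := by
  rw [Algebra.smul_def, map_mul, q0mk_algebraMap, ← Algebra.smul_def]

lemma q0mk_single_theta (c : ℚ) : q0mk (MonoidAlgebra.single T1.theta c) = 0 := by
  have hmem : MonoidAlgebra.single T1.theta c ∈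
      TwoSidedIdeal.span {MonoidAlgebra.single T1.theta (1 : ℚ)} := by
    have : MonoidAlgebra.single T1.theta c =
        MonoidAlgebra.single (T1.one) c * MonoidAlgebra.single T1.theta 1 := by
      rw [MonoidAlgebra.single_mul_single, mul_one, show T1.one * T1.theta = T1.theta from rfl]
    rw [this]
    exact TwoSidedIdeal.mul_mem_left _ _ _ (TwoSidedIdeal.subset_span rfl)
  show (TwoSidedIdeal.span {MonoidAlgebra.single T1.theta (1:ℚ)}).ringCon.mk' _ = 0
  rw [← map_zero ((TwoSidedIdeal.span {MonoidAlgebra.single T1.theta (1:ℚ)}).ringCon.mk')]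
  exact (RingCon.eq _).mpr ((TwoSidedIdeal.rel_iff _ _ _).mpr (by simpa using hmem))

lemma decomp (g : MonoidAlgebra ℚ T1) :
    g = MonoidAlgebra.single T1.one (g.coeff T1.one) + MonoidAlgebra.single T1.e (g.coeff T1.e)
      + MonoidAlgebra.single T1.f (g.coeff T1.f) + MonoidAlgebra.single T1.theta (g.coeff T1.theta) := by
  ext t
  cases t <;> simp [MonoidAlgebra.coeff_add, MonoidAlgebra.coeff_single, Finsupp.single_apply]

lemma Phi_single (t : T1) (c : ℚ) : Phi (MonoidAlgebra.single t c) = c • chi t := by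
  simp [Phi]

lemma phi_val (g : MonoidAlgebra ℚ T1) :
    phi (q0mk g) = (g.coeff T1.one, g.coeff T1.one + g.coeff T1.e + g.coeff T1.f) := by
  rw [phi_q0mk]
  conv_lhs => rw [decomp g]
  simp only [map_add, Phi_single]
  simp [chi, Prod.ext_iff]
noncomputable def dd : Q0T1 :=
  q0mk (MonoidAlgebra.single T1.e 1 - MonoidAlgebra.single T1.f 1)

lemma dd_sq : dd * dd = 0 := by
  rw [dd, ← map_mul]
  have h : (MonoidAlgebra.single T1.e (1:ℚ) - MonoidAlgebra.single T1.f 1) *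
      (MonoidAlgebra.single T1.e 1 - MonoidAlgebra.single T1.f 1) = 0 := by
    rw [sub_mul, mul_sub, mul_sub, MonoidAlgebra.single_mul_single,
      MonoidAlgebra.single_mul_single, MonoidAlgebra.single_mul_single,
      MonoidAlgebra.single_mul_single,
      show T1.e * T1.e = T1.e from rfl, show T1.e * T1.f = T1.f from rfl,
      show T1.f * T1.e = T1.e from rfl, show T1.f * T1.f = T1.f from rfl]
    abel
  rw [h, map_zero]

lemma phi_dd : phi dd = 0 := by
  rw [dd, phi_q0mk, map_sub, Phi_single, Phi_single]
  simp [chi]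

lemma mem_ker_iff_span (x : Q0T1) : phi x = 0 ↔ x ∈ Submodule.span ℚ {dd} := by
  constructor
  · intro hx
    obtain ⟨g, rfl⟩ : ∃ g, q0mk g = x := Quotient.inductionOn' x fun g => ⟨g, rfl⟩
    rw [phi_val] at hx
    have h1 : g.coeff T1.one = 0 := congrArg Prod.fst hx
    have h2 : g.coeff T1.one + g.coeff T1.e + g.coeff T1.f = 0 := congrArg Prod.snd hx
    have hf : g.coeff T1.f = -(g.coeff T1.e) := by rw [h1] at h2; linarith
    rw [Submodule.mem_span_singleton]
    refine ⟨g.coeff T1.e, ?_⟩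
    conv_rhs => rw [decomp g]
    rw [map_add, map_add, map_add, q0mk_single_theta, add_zero, h1, hf]
    rw [dd, ← q0mk_smul, ← map_add, ← map_add]
    congr 1
    rw [smul_sub, MonoidAlgebra.smul_single', mul_one, MonoidAlgebra.smul_single', mul_one]
    simp [MonoidAlgebra.single_neg]
    abel
  · intro hx
    obtain ⟨c, rfl⟩ := Submodule.mem_span_singleton.mp hx
    rw [map_smul, phi_dd, smul_zero]

lemma phi_surj : Function.Surjective phi := by
  intro p
  refine ⟨q0mk (MonoidAlgebra.single T1.one p.1 + MonoidAlgebra.single T1.e (p.2 - p.1)), ?_⟩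
  rw [phi_q0mk, map_add, Phi_single, Phi_single]
  simp [chi, Prod.ext_iff]

lemma sq_zero_of_ker {x : Q0T1} (hx : phi x = 0) : x * x = 0 := by
  obtain ⟨c, rfl⟩ := Submodule.mem_span_singleton.mp ((mem_ker_iff_span x).mp hx)
  rw [smul_mul_assoc, mul_smul_comm, dd_sq, smul_zero, smul_zero]

lemma jac_eq : (⊥ : Ideal Q0T1).jacobson = RingHom.ker phi := by
  ext x
  rw [Ideal.mem_jacobson_iff, RingHom.mem_ker]
  constructor
  · intro h
    have key : ∀ w : ℚ × ℚ, ∃ zz : ℚ × ℚ, zz * (w * phi x + 1) = 1 := by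
      intro w
      obtain ⟨y, hy⟩ := phi_surj w
      obtain ⟨z, hz⟩ := h y
      rw [Submodule.mem_bot, sub_eq_zero] at hz
      refine ⟨phi z, ?_⟩
      have := congrArg phi hz
      rw [map_add, map_mul, map_mul, map_one, hy] at this
      rw [mul_add, mul_one, ← mul_assoc, this]
    have h1 : (phi x).1 = 0 := by
      by_contra hp
      obtain ⟨zz, hzz⟩ := key (-((phi x).1)⁻¹, 0)
      have := congrArg Prod.fst hzz
      simp [Prod.fst_mul, Prod.fst_add, hp] at this
    have h2 : (phi x).2 = 0 := by
      by_contra hp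
      obtain ⟨zz, hzz⟩ := key (0, -((phi x).2)⁻¹)
      have := congrArg Prod.snd hzz
      simp [Prod.snd_mul, Prod.snd_add, hp] at this
    exact Prod.ext h1 h2
  · intro hx y
    refine ⟨1 - y * x, ?_⟩
    have hyx : phi (y * x) = 0 := by rw [map_mul, hx, mul_zero]
    have hsq := sq_zero_of_ker hyx
    rw [Submodule.mem_bot, mul_assoc]
    have expand : (1 - y * x) * (y * x) + (1 - y * x) - 1 = -((y * x) * (y * x)) := by
      noncomm_ring
    rw [expand, hsq, neg_zero]
theorem jacobson_radical_Q0T1_eq_span_e_sub_f :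
    (((⊥ : Ideal Q0T1).jacobson : Set Q0T1) =
      (Submodule.span ℚ {q0mk (MonoidAlgebra.single T1.e 1 - MonoidAlgebra.single T1.f 1)} :
        Submodule ℚ Q0T1)) ∧
    (∀ a ∈ (⊥ : Ideal Q0T1).jacobson, ∀ r : Q0T1,
      r * a ∈ (⊥ : Ideal Q0T1).jacobson ∧ a * r ∈ (⊥ : Ideal Q0T1).jacobson) ∧
    (∀ a ∈ (⊥ : Ideal Q0T1).jacobson, ∀ b ∈ (⊥ : Ideal Q0T1).jacobson, a * b = 0) ∧
    ∃ φ : Q0T1 →ₐ[ℚ] ℚ × ℚ,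
      Function.Surjective φ ∧ RingHom.ker φ = (⊥ : Ideal Q0T1).jacobson := by
  have hdd : q0mk (MonoidAlgebra.single T1.e 1 - MonoidAlgebra.single T1.f 1) = dd := rfl
  refine ⟨?_, ?_, ?_, phi, phi_surj, jac_eq.symm⟩
  · rw [hdd]
    ext x
    simp only [SetLike.mem_coe, jac_eq, RingHom.mem_ker]
    exact mem_ker_iff_span x
  · intro a ha r
    rw [jac_eq, RingHom.mem_ker] at ha
    constructor <;> rw [jac_eq, RingHom.mem_ker, map_mul, ha] <;> simp
  · intro a ha b hb
    rw [jac_eq, RingHom.mem_ker, mem_ker_iff_span] at ha hb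
    obtain ⟨c, rfl⟩ := Submodule.mem_span_singleton.mp ha
    obtain ⟨c', rfl⟩ := Submodule.mem_span_singleton.mp hb
    rw [smul_mul_assoc, mul_smul_comm, dd_sq, smul_zero, smul_zero]
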